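/- Let x ∈ ℝ^{n×q}, let ν ∈ ℝⁿ be nonzero, let Σ ∈ ℝ^{q×q} be symmetric with Σ_{jj} ≠ 0 for a fixed j ∈ {1, …, q}, let Σ_j denote the j-th column of Σ, define U(y) = y − ν Σ_jᵀ [yᵀν]_j / (‖ν‖₂² Σ_{jj}) for y ∈ ℝ^{n×q}, and for φ ∈ ℝ define x′(φ, j) = x + (φ − [xᵀν]_j) (ν/‖ν‖₂²) (Σ_j/Σ_{jj})ᵀ. Then U(x′(φ, j)) = U(x) for every φ ∈ ℝ. -/

import Mathlib

open Matrix

/-- with `U(y) = y − ν Σ_jᵀ [yᵀν]_j / (‖ν‖₂² Σ_{jj})` and the perturbed matrix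
`x′(φ, j) = x + (φ − [xᵀν]_j) (ν/‖ν‖₂²) (Σ_j/Σ_{jj})ᵀ`, we have `U(x′(φ, j)) = U(x)` for
every `φ ∈ ℝ`. -/
theorem U_of_perturbed_matrix {n q : ℕ}
    (x : Matrix (Fin n) (Fin q) ℝ) (ν : Fin n → ℝ) (hν : ν ≠ 0)
    (S : Matrix (Fin q) (Fin q) ℝ) (hsymm : S.IsSymm) (j : Fin q) (hjj : S j j ≠ 0)
    (U : Matrix (Fin n) (Fin q) ℝ → Matrix (Fin n) (Fin q) ℝ)
    (hU : ∀ y : Matrix (Fin n) (Fin q) ℝ,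
      U y = y - ((yᵀ *ᵥ ν) j / ((∑ i, ν i ^ 2) * S j j)) • vecMulVec ν (fun k => S k j))
    (x' : ℝ → Matrix (Fin n) (Fin q) ℝ)
    (hx' : ∀ φ : ℝ, x' φ = x + (φ - (xᵀ *ᵥ ν) j) •
      vecMulVec (fun i => ν i / ∑ i', ν i' ^ 2) (fun k => S k j / S j j)) :
    ∀ φ : ℝ, U (x' φ) = U x := by
  intro φ
  have hN : (∑ i, ν i ^ 2) ≠ 0 := by
    intro h
    apply hν
    funext i
    have hnn : ∀ i ∈ Finset.univ, (0:ℝ) ≤ ν i ^ 2 := fun i _ => sq_nonneg _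
    have := (Finset.sum_eq_zero_iff_of_nonneg hnn).mp h i (Finset.mem_univ i)
    exact pow_eq_zero_iff (by norm_num) |>.mp this
  set N := ∑ i, ν i ^ 2 with hNdef
  set c := (xᵀ *ᵥ ν) j with hc
  have key : ((x' φ)ᵀ *ᵥ ν) j = φ := by
    rw [hx']
    simp only [mulVec, dotProduct, transpose_apply, Matrix.add_apply, Matrix.smul_apply,
      vecMulVec_apply, smul_eq_mul]
    have : ∀ i, (x i j + (φ - c) * (ν i / N * (S j j / S j j))) * ν i
        = x i j * ν i + (φ - c) / N * (ν i ^ 2) := by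
      intro i
      field_simp
    rw [Finset.sum_congr rfl fun i _ => this i, Finset.sum_add_distrib,
      ← Finset.mul_sum, ← hNdef]
    have hcc : c = ∑ i, x i j * ν i := by
      simp [hc, mulVec, dotProduct, transpose_apply]
    rw [← hcc]
    field_simp
    ring
  rw [hU, hU, key, hx']
  ext i k
  simp only [Matrix.sub_apply, Matrix.add_apply, Matrix.smul_apply, vecMulVec_apply, smul_eq_mul]
  field_simp
  ring
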